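/- arXiv:1903.10592 — 3 statements merged into one kernel-verified Lean document; each statement's English description precedes it below -/
import Mathlib

section
/- Let T be a tree with at most l ≥ 2 leaves, and suppose Y is a subset of the vertices of T with the property that every edge of T has exactly one endpoint in Y. Then the number of edges of T is at most 2|Y| + l - 2. -/
/-- If a tree `G` has at most `l ≥ 2` leaves and `Y` is a set of vertices
such that every edge has exactly one endpoint in `Y`, then `|T| ≤ 2|Y| + l - 2`. -/
theorem stmt_0 {V : Type} [Fintype V] [DecidableEq V] (G : SimpleGraph V)
    [DecidableRel G.Adj] (hT : G.IsTree) (l : ℕ) (hl : 2 ≤ l)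
    (hleaves : (Finset.univ.filter fun v => G.degree v = 1).card ≤ l)
    (Y : Finset V)
    (hY : ∀ v w : V, G.Adj v w → (v ∈ Y ↔ w ∉ Y)) :
    G.edgeFinset.card ≤ 2 * Y.card + l - 2 := by
  have hcard := hT.card_edgeFinset
  rcases le_or_gt (Fintype.card V) 1 with hn | hn
  · omega
  have hdeg : ∀ v : V, 1 ≤ G.degree v := by
    intro v
    obtain ⟨w, hw⟩ := Fintype.exists_ne_of_one_lt_card hn v
    obtain ⟨p⟩ := hT.isConnected.preconnected v w
    rw [Nat.one_le_iff_ne_zero, ← Nat.pos_iff_ne_zero, G.degree_pos_iff_exists_adj]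
    exact ⟨p.getVert 1, SimpleGraph.Walk.adj_snd
      (SimpleGraph.Walk.not_nil_of_ne (Ne.symm hw))⟩
  -- edges biUnion over Yᶜ of incident edges
  have hsplit : G.edgeFinset = Yᶜ.biUnion (fun v => G.incidenceFinset v) := by
    ext e
    induction e with
    | _ a b =>
      simp only [Finset.mem_biUnion, SimpleGraph.mem_incidenceFinset, Finset.mem_compl,
        SimpleGraph.mem_edgeFinset, SimpleGraph.mem_edgeSet, SimpleGraph.incidenceSet,
        Set.mem_setOf_eq, Set.mem_sep_iff]
      constructor
      · intro hab
        by_cases ha : a ∈ Y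
        · exact ⟨b, (hY a b hab).mp ha, hab, Sym2.mem_mk_right a b⟩
        · exact ⟨a, ha, hab, Sym2.mem_mk_left a b⟩
      · rintro ⟨v, -, hadj, -⟩
        exact hadj
  have hdisj : (↑(Yᶜ : Finset V) : Set V).PairwiseDisjoint (fun v => G.incidenceFinset v) := by
    intro a ha b hb hab
    simp only [Finset.coe_compl, Set.mem_compl_iff, Finset.mem_coe] at ha hb
    refine Finset.disjoint_left.mpr ?_
    intro e hea heb
    rw [SimpleGraph.mem_incidenceFinset] at hea heb
    obtain ⟨he, hae⟩ := hea
    obtain ⟨-, hbe⟩ := heb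
    induction e with
    | _ x y =>
      rw [SimpleGraph.mem_edgeSet] at he
      rcases Sym2.mem_iff.mp hae with rfl | rfl <;> rcases Sym2.mem_iff.mp hbe with rfl | rfl
      · exact hab rfl
      · exact absurd ((hY a b he).mpr hb) ha
      · exact absurd ((hY b a he).mpr ha) hb
      · exact hab rfl
  have hsum : G.edgeFinset.card = ∑ v ∈ Yᶜ, G.degree v := by
    rw [hsplit, Finset.card_biUnion (fun a ha b hb hab => hdisj ha hb hab)]
    exact Finset.sum_congr rfl fun v _ => G.card_incidenceFinset_eq_degree v
  -- pointwise bound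
  have hpt : ∀ v ∈ (Yᶜ : Finset V), 2 ≤ G.degree v + (if G.degree v = 1 then 1 else 0) := by
    intro v _
    have := hdeg v
    split <;> omega
  have hbound : 2 * (Yᶜ : Finset V).card ≤ (∑ v ∈ Yᶜ, G.degree v) + l := by
    calc 2 * (Yᶜ : Finset V).card = ∑ _v ∈ Yᶜ, 2 := by rw [Finset.sum_const, smul_eq_mul, mul_comm]
    _ ≤ ∑ v ∈ Yᶜ, (G.degree v + (if G.degree v = 1 then 1 else 0)) :=
        Finset.sum_le_sum hpt
    _ = (∑ v ∈ Yᶜ, G.degree v) + ∑ v ∈ Yᶜ, (if G.degree v = 1 then 1 else 0) :=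
        Finset.sum_add_distrib
    _ ≤ (∑ v ∈ Yᶜ, G.degree v) + l := by
        gcongr
        calc ∑ v ∈ Yᶜ, (if G.degree v = 1 then 1 else 0)
            ≤ ∑ v ∈ Finset.univ, (if G.degree v = 1 then 1 else 0) :=
              Finset.sum_le_sum_of_subset (Finset.subset_univ _)
          _ = (Finset.univ.filter fun v => G.degree v = 1).card := by
              rw [Finset.card_filter]
          _ ≤ l := hleaves
  have hYc : Y.card + (Yᶜ : Finset V).card = Fintype.card V := by
    rw [Finset.card_add_card_compl]
  omega
end

section
/- Let T be a tree with d edges and let M = P_T be the principal projective module over the opposite tree-contraction category, over a field k. Then for every tree T', dim_k P_T(T') ≤ |Aut(T)| · C(|T'|, d), where P_T(T') is the free vector space on the set of contractions from T' to T. -/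
open scoped Classical


/-- A contraction of graphs, encoded by its vertex map: a surjection taking edges to
edges or vertices, hitting every edge of the target, with connected fibers. -/
def IsContraction {V V' : Type} (G : SimpleGraph V) (G' : SimpleGraph V')
    (f : V → V') : Prop :=
  Function.Surjective f ∧
  (∀ v w : V, G.Adj v w → f v = f w ∨ G'.Adj (f v) (f w)) ∧
  (∀ a b : V', G'.Adj a b → ∃ v w : V, G.Adj v w ∧ f v = a ∧ f w = b) ∧
  (∀ v' : V', (G.induce (f ⁻¹' {v'})).Connected)

namespace Stmt16

variable {V V' : Type} (G : SimpleGraph V) (G' : SimpleGraph V')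

/-- The subgraph of collapsed edges. -/
def collapsed (f : V' → V) : SimpleGraph V' where
  Adj v w := G'.Adj v w ∧ f v = f w
  symm := ⟨fun v w h => ⟨h.1.symm, h.2.symm⟩⟩
  loopless := ⟨fun v h => G'.loopless.irrefl v h.1⟩

lemma reach_iff {f : V' → V} (hf : IsContraction G' G f) (v w : V') :
    f v = f w ↔ (collapsed G' f).Reachable v w := by
  constructor
  · intro hvw
    have hconn := hf.2.2.2 (f v)
    have hv : v ∈ f ⁻¹' {f v} := rfl
    have hw : w ∈ f ⁻¹' {f v} := by simp [Set.mem_preimage, hvw]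
    have hr := hconn.preconnected ⟨v, hv⟩ ⟨w, hw⟩
    let φ : (G'.induce (f ⁻¹' {f v})) →g collapsed G' f :=
      { toFun := Subtype.val
        map_rel' := by
          rintro ⟨a, ha⟩ ⟨b, hb⟩ hab
          simp only [Set.mem_preimage, Set.mem_singleton_iff] at ha hb
          exact ⟨hab, ha.trans hb.symm⟩ }
    exact hr.map φ
  · rintro ⟨p⟩
    induction p with
    | nil => rfl
    | cons h p ih => exact h.2.trans ih

/-- The non-collapsed edges of `G'`. -/
noncomputable def ncEdges (f : V' → V) [Fintype V'] [DecidableRel G'.Adj] :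
    Finset (Sym2 V') :=
  G'.edgeFinset.filter (fun e => ¬ (e.map f).IsDiag)

variable [Fintype V] [Fintype V'] [DecidableRel G.Adj] [DecidableRel G'.Adj]

lemma mem_ncEdges {f : V' → V} {v w : V'} :
    s(v, w) ∈ ncEdges G' f ↔ G'.Adj v w ∧ f v ≠ f w := by
  simp [ncEdges, SimpleGraph.mem_edgeFinset, SimpleGraph.mem_edgeSet, Sym2.map_pair_eq,
    Sym2.mk_isDiag_iff]

lemma collapsed_eq_of_ncEdges_eq {f h : V' → V}
    (hE : ncEdges G' f = ncEdges G' h) : collapsed G' f = collapsed G' h := by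
  ext v w
  constructor
  · rintro ⟨hadj, hfe⟩
    refine ⟨hadj, ?_⟩
    by_contra hne
    have : s(v, w) ∈ ncEdges G' f := hE ▸ (mem_ncEdges G').2 ⟨hadj, hne⟩
    exact ((mem_ncEdges G').1 this).2 hfe
  · rintro ⟨hadj, hfe⟩
    refine ⟨hadj, ?_⟩
    by_contra hne
    have : s(v, w) ∈ ncEdges G' h := hE ▸ (mem_ncEdges G').2 ⟨hadj, hne⟩
    exact ((mem_ncEdges G').1 this).2 hfe

lemma fib_eq {f h : V' → V} (hf : IsContraction G' G f) (hh : IsContraction G' G h)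
    (hE : ncEdges G' f = ncEdges G' h) : ∀ v w, f v = f w ↔ h v = h w := by
  intro v w
  rw [reach_iff G G' hf, reach_iff G G' hh, collapsed_eq_of_ncEdges_eq G' hE]

lemma sym2_inj (hac : G'.IsAcyclic) {f : V' → V} (hf : IsContraction G' G f)
    {v w x y : V'} (hvw : G'.Adj v w) (hxy : G'.Adj x y)
    (h1 : f v = f x) (h2 : f w = f y) (hne : f v ≠ f w) : s(v, w) = s(x, y) := by
  by_contra hne2
  have hbridge : G'.IsBridge s(v, w) :=
    (SimpleGraph.isAcyclic_iff_forall_edge_isBridge.1 hac)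
      (G'.mem_edgeSet.mpr hvw)
  have hnr : ¬ (G' \ SimpleGraph.fromEdgeSet {s(v, w)}).Reachable v w :=
    (SimpleGraph.isBridge_iff.1 hbridge)
  apply hnr
  have hle : collapsed G' f ≤ (G' \ SimpleGraph.fromEdgeSet {s(v, w)}) := by
    rintro a b ⟨hab, hfab⟩
    refine ⟨hab, ?_⟩
    rw [SimpleGraph.fromEdgeSet_adj]
    rintro ⟨habs, -⟩
    rw [Set.mem_singleton_iff, Sym2.eq_iff] at habs
    rcases habs with ⟨rfl, rfl⟩ | ⟨rfl, rfl⟩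
    · exact hne hfab
    · exact hne hfab.symm
  have hvx : (G' \ SimpleGraph.fromEdgeSet {s(v, w)}).Reachable v x :=
    ((reach_iff G G' hf v x).1 h1).mono hle
  have hyw : (G' \ SimpleGraph.fromEdgeSet {s(v, w)}).Reachable y w :=
    ((reach_iff G G' hf y w).1 h2.symm).mono hle
  have hxy' : (G' \ SimpleGraph.fromEdgeSet {s(v, w)}).Adj x y := by
    refine ⟨hxy, ?_⟩
    rw [SimpleGraph.fromEdgeSet_adj]
    rintro ⟨habs, -⟩
    rw [Set.mem_singleton_iff] at habs
    exact hne2 habs.symm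
  exact hvx.trans (hxy'.reachable.trans hyw)

lemma card_ncEdges (hac : G'.IsAcyclic) {f : V' → V} (hf : IsContraction G' G f) :
    (ncEdges G' f).card = G.edgeFinset.card := by
  apply Finset.card_bij (fun e _ => e.map f)
  · intro e he
    induction e using Sym2.inductionOn with
    | hf v w =>
      obtain ⟨hadj, hne⟩ := (mem_ncEdges G').1 he
      rw [Sym2.map_pair_eq, SimpleGraph.mem_edgeFinset, SimpleGraph.mem_edgeSet]
      rcases hf.2.1 v w hadj with h | h
      · exact absurd h hne
      · exact h
  · intro e₁ he₁ e₂ he₂ heq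
    induction e₁ using Sym2.inductionOn with
    | hf v w =>
      induction e₂ using Sym2.inductionOn with
      | hf x y =>
        obtain ⟨hvw, hne⟩ := (mem_ncEdges G').1 he₁
        obtain ⟨hxy, hne'⟩ := (mem_ncEdges G').1 he₂
        rw [Sym2.map_pair_eq, Sym2.map_pair_eq, Sym2.eq_iff] at heq
        rcases heq with ⟨h1, h2⟩ | ⟨h1, h2⟩
        · exact sym2_inj G G' hac hf hvw hxy h1 h2 hne
        · have := sym2_inj G G' hac hf hvw hxy.symm h1 h2 hne
          rw [this, Sym2.eq_swap]
  · intro b hb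
    induction b using Sym2.inductionOn with
    | hf a a' =>
      rw [SimpleGraph.mem_edgeFinset, SimpleGraph.mem_edgeSet] at hb
      obtain ⟨v, w, hvw, hfv, hfw⟩ := hf.2.2.1 a a' hb
      refine ⟨s(v, w), (mem_ncEdges G').2 ⟨hvw, ?_⟩, ?_⟩
      · rw [hfv, hfw]; exact hb.ne
      · rw [Sym2.map_pair_eq, hfv, hfw]

lemma exists_iso {f h : V' → V} (hf : IsContraction G' G f) (hh : IsContraction G' G h)
    (hfib : ∀ v w, f v = f w ↔ h v = h w) :
    ∃ σ : G ≃g G, ∀ v, σ (h v) = f v := by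
  classical
  set hinv := Function.surjInv hh.1 with hinv_def
  set σ₀ : V → V := f ∘ hinv with hσ₀
  have hσh : ∀ v, σ₀ (h v) = f v := by
    intro v
    have : h (hinv (h v)) = h v := Function.surjInv_eq hh.1 (h v)
    exact (hfib _ _).2 this
  have hsurj : Function.Surjective σ₀ := by
    intro a
    obtain ⟨v, hv⟩ := hf.1 a
    exact ⟨h v, by rw [hσh v, hv]⟩
  have hbij : Function.Bijective σ₀ := Finite.surjective_iff_bijective.1 hsurj
  refine ⟨⟨Equiv.ofBijective σ₀ hbij, ?_⟩, hσh⟩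
  intro a b
  simp only [Equiv.ofBijective_apply]
  constructor
  · intro hab
    obtain ⟨v, w, hvw, hfv, hfw⟩ := hf.2.2.1 _ _ hab
    have hne : f v ≠ f w := by rw [hfv, hfw]; exact hab.ne
    have hne' : h v ≠ h w := fun hc => hne ((hfib v w).2 hc)
    have : G.Adj (h v) (h w) := (hh.2.1 v w hvw).resolve_left hne'
    have hva : h v = a := hbij.1 (by rw [hσh v, hfv])
    have hwb : h w = b := hbij.1 (by rw [hσh w, hfw])
    rwa [hva, hwb] at this
  · intro hab
    obtain ⟨v, w, hvw, hhv, hhw⟩ := hh.2.2.1 _ _ hab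
    have hne' : h v ≠ h w := by rw [hhv, hhw]; exact hab.ne
    have hne : f v ≠ f w := fun hc => hne' ((hfib v w).1 hc)
    have : G.Adj (f v) (f w) := (hf.2.1 v w hvw).resolve_left hne
    rwa [← hhv, ← hhw, hσh v, hσh w]

end Stmt16

/-- For trees `T` (with `d` edges) and `T'`, the dimension over a field
`k` of the principal projective `P_T(T')`, i.e. the free `k`-vector space on the set of
contractions `T' → T`, is at most `|Aut(T)| · C(|T'|, d)`. -/
theorem stmt_16 {k : Type} [Field k] {V V' : Type} [Fintype V] [Fintype V']
    (G : SimpleGraph V) (G' : SimpleGraph V')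
    [DecidableRel G.Adj] [DecidableRel G'.Adj]
    (hG : G.IsTree) (hG' : G'.IsTree) (d : ℕ) (hd : G.edgeFinset.card = d) :
    Module.finrank k ({f : V' → V // IsContraction G' G f} →₀ k) ≤
      Nat.card (G ≃g G) * (G'.edgeFinset.card).choose d := by
  classical
  set S := {f : V' → V // IsContraction G' G f} with hS
  haveI : Finite S := Subtype.finite
  haveI : Fintype S := Fintype.ofFinite S
  rw [Module.finrank_finsupp_self]
  rw [← Nat.card_eq_fintype_card]
  -- target type
  set T := {E : Finset (Sym2 V') // E ∈ G'.edgeFinset.powersetCard d} with hT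
  haveI : Finite (G ≃g G) :=
    Finite.of_injective (fun σ => (σ : V → V)) DFunLike.coe_injective
  have hmemT : ∀ f : S, Stmt16.ncEdges G' f.1 ∈ G'.edgeFinset.powersetCard d := by
    intro f
    rw [Finset.mem_powersetCard]
    exact ⟨Finset.filter_subset _ _, by
      rw [Stmt16.card_ncEdges G G' hG'.IsAcyclic f.2, hd]⟩
  -- the pick function
  let pick : ∀ (E : Finset (Sym2 V')), (∃ g : S, Stmt16.ncEdges G' g.1 = E) → S :=
    fun E hE => hE.choose
  have pick_spec : ∀ E hE, Stmt16.ncEdges G' ((pick E hE).1) = E := fun E hE => hE.choose_spec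
  have pick_congr : ∀ (E₁ E₂) (h₁ : ∃ g : S, Stmt16.ncEdges G' g.1 = E₁)
      (h₂ : ∃ g : S, Stmt16.ncEdges G' g.1 = E₂), E₁ = E₂ → pick E₁ h₁ = pick E₂ h₂ := by
    rintro E₁ E₂ h₁ h₂ rfl; rfl
  have hsig : ∀ f : S, ∃ σ : G ≃g G,
      ∀ v, σ ((pick (Stmt16.ncEdges G' f.1) ⟨f, rfl⟩).1 v) = f.1 v := by
    intro f
    apply Stmt16.exists_iso G G' f.2 (pick (Stmt16.ncEdges G' f.1) ⟨f, rfl⟩).2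
    exact Stmt16.fib_eq G G' f.2 (pick (Stmt16.ncEdges G' f.1) ⟨f, rfl⟩).2
      (pick_spec _ _).symm
  let Θ : S → (G ≃g G) × T := fun f =>
    ⟨(hsig f).choose, ⟨Stmt16.ncEdges G' f.1, hmemT f⟩⟩
  have hΘ : Function.Injective Θ := by
    intro f g hfg
    have hE : Stmt16.ncEdges G' f.1 = Stmt16.ncEdges G' g.1 :=
      congrArg (fun p => p.2.1) hfg
    have hσ : (hsig f).choose = (hsig g).choose := congrArg (fun p => p.1) hfg
    have hpick : pick (Stmt16.ncEdges G' f.1) ⟨f, rfl⟩ = pick (Stmt16.ncEdges G' g.1) ⟨g, rfl⟩ :=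
      pick_congr _ _ _ _ hE
    apply Subtype.ext
    funext v
    have h1 := (hsig f).choose_spec v
    have h2 := (hsig g).choose_spec v
    rw [← h1, ← h2, hσ, hpick]
  calc Nat.card S ≤ Nat.card ((G ≃g G) × T) := Nat.card_le_card_of_injective Θ hΘ
    _ = Nat.card (G ≃g G) * Nat.card T := Nat.card_prod _ _
    _ = Nat.card (G ≃g G) * (G'.edgeFinset.card).choose d := by
        rw [Nat.card_eq_finsetCard, Finset.card_powersetCard]
end

section
/- For a tree T with at most l leaves and a flat of cone(T) encoded by a triple (R, W, U) where R is a tree, U partitions T into subtrees indexed by vertices of R with adjacency pattern R, and W ⊆ V(R) is a subset meeting every edge of R: then |R| + |R_W| ≤ 2|W| + l - 2, where R_W is the induced forest on the vertex set W. -/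
open Finset

open Classical in
/-- In a connected graph on at least two vertices, every vertex has degree at least 1. -/
private lemma aux_one_le_degree {V : Type} [Fintype V] (G : SimpleGraph V) [DecidableRel G.Adj]
    (hc : G.Connected) (h2 : 2 ≤ Fintype.card V) (v : V) : 1 ≤ G.degree v := by
  obtain ⟨w, hw⟩ := Fintype.exists_ne_of_one_lt_card (by omega) v
  obtain ⟨p⟩ := hc.preconnected v w
  have hadj := SimpleGraph.Walk.adj_snd (p := p) (SimpleGraph.Walk.not_nil_of_ne (Ne.symm hw))
  have : 0 < G.degree v := (SimpleGraph.degree_pos_iff_exists_adj _ _).2 ⟨_, hadj⟩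
  omega

open Classical in
/-- Handshake count for a connected induced subgraph of an acyclic graph. -/
private lemma aux_induce_sum {V : Type} [Fintype V] [DecidableEq V] (G : SimpleGraph V)
    [DecidableRel G.Adj] (hac : G.IsAcyclic) (s : Set V) (hc : (G.induce s).Connected) :
    (∑ u ∈ univ.filter (· ∈ s), ∑ v ∈ univ.filter (· ∈ s), if G.Adj u v then 1 else 0) + 2
      = 2 * (univ.filter (· ∈ s)).card := by
  have hac' : (G.induce s).IsAcyclic := by
    intro v c hcyc
    exact hac (c.map (SimpleGraph.Embedding.induce s (G := G)).toHom)
      (hcyc.map (SimpleGraph.Embedding.induce s (G := G)).injective)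
  have htree : (G.induce s).IsTree := ⟨hc, hac'⟩
  have hcard := htree.card_edgeFinset
  have hhand := SimpleGraph.sum_degrees_eq_twice_card_edges (G.induce s)
  have h1 : (∑ u ∈ univ.filter (· ∈ s), ∑ v ∈ univ.filter (· ∈ s),
      if G.Adj u v then 1 else 0) = ∑ u : s, (G.induce s).degree u := by
    rw [Finset.sum_subtype (p := (· ∈ s)) _ (fun x => by simp)]
    refine Finset.sum_congr rfl fun u _ => ?_
    rw [← SimpleGraph.card_neighborFinset_eq_degree, SimpleGraph.neighborFinset_eq_filter,
      Finset.card_filter]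
    rw [Finset.sum_subtype (p := (· ∈ s)) _ (fun x => by simp)]
    exact Finset.sum_congr rfl fun v _ => if_congr Iff.rfl rfl rfl
  have h2 : Fintype.card s = (univ.filter (· ∈ s)).card := by
    simp [Fintype.card_subtype]
  omega

open Classical in
/-- Let `T` be a tree with at most `l ≥ 2` leaves, and let a flat of
`cone(T)` be encoded by a triple `(R, W, U)`: a tree `R`, a decomposition of `T` into
subtrees indexed by the vertices of `R` with adjacency pattern `R` (encoded by the map
`π : V(T) → V(R)` with connected fibers), and a groovy subset `W ⊆ V(R)` (meeting every
edge of `R`).  Then `|R| + |R_W| ≤ 2|W| + l - 2`, where `R_W` is the induced forest on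
`W`. -/
theorem stmt_19 {V VR : Type} [Fintype V] [Fintype VR] [DecidableEq V]
    (G : SimpleGraph V) (R : SimpleGraph VR)
    [DecidableRel G.Adj] [DecidableRel R.Adj]
    (hG : G.IsTree) (hR : R.IsTree) (l : ℕ) (hl : 2 ≤ l)
    (hleaves : (Finset.univ.filter fun v => G.degree v = 1).card ≤ l)
    (π : V → VR)
    (hfib : ∀ a : VR, (G.induce (π ⁻¹' {a})).Connected)
    (hadj : ∀ a b : VR, a ≠ b →
      (R.Adj a b ↔ ∃ v w : V, G.Adj v w ∧ π v = a ∧ π w = b))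
    (W : Finset VR) (hW : ∀ a b : VR, R.Adj a b → a ∈ W ∨ b ∈ W) :
    R.edgeFinset.card + (R.edgeFinset.filter fun e => ∀ x ∈ e, x ∈ W).card ≤
      2 * W.card + l - 2 := by
  by_cases hn : 2 ≤ Fintype.card VR
  case neg =>
    have he : R.edgeFinset = ∅ := by
      rw [Finset.eq_empty_iff_forall_notMem]
      intro e he
      induction e using Sym2.ind with
      | _ a b =>
        rw [SimpleGraph.mem_edgeFinset, SimpleGraph.mem_edgeSet] at he
        exact hn (Fintype.one_lt_card_iff_nontrivial.2 ⟨a, b, he.ne⟩)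
    rw [he]
    simp
  case pos =>
  -- the fibers
  set F : VR → Finset V := fun a => univ.filter (fun v => π v = a) with hFdef
  have hFeq : ∀ a, univ.filter (· ∈ π ⁻¹' {a}) = F a := by
    intro a; ext v; simp [hFdef]
  have hFne : ∀ a, (F a).Nonempty := by
    intro a
    obtain ⟨⟨v, hv⟩⟩ := (hfib a).nonempty
    exact ⟨v, by simpa [hFdef] using hv⟩
  have hV2 : 2 ≤ Fintype.card V := by
    have h1 : 1 < Fintype.card VR := by omega
    obtain ⟨a, b, hab⟩ := Fintype.exists_pair_of_one_lt_card h1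
    obtain ⟨u, hu⟩ := hFne a
    obtain ⟨v, hv⟩ := hFne b
    rw [hFdef, Finset.mem_filter] at hu hv
    refine Fintype.one_lt_card_iff_nontrivial.2 ⟨u, v, fun h => hab ?_⟩
    rw [← hu.2, ← hv.2, h]
  -- number of adjacent pairs between fibers
  set D : VR → VR → ℕ :=
    fun a b => ∑ u ∈ F a, ∑ v ∈ F b, if G.Adj u v then 1 else 0 with hDdef
  have hdeg : ∀ u : V, ∑ v, (if G.Adj u v then 1 else 0) = G.degree u := by
    intro u
    rw [← SimpleGraph.card_neighborFinset_eq_degree, SimpleGraph.neighborFinset_eq_filter,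
      Finset.card_filter]
  have hrow : ∀ a, ∑ b, D a b = ∑ u ∈ F a, G.degree u := by
    intro a
    rw [hDdef, Finset.sum_comm]
    refine Finset.sum_congr rfl fun u _ => ?_
    rw [← hdeg u]
    exact Finset.sum_fiberwise univ π (fun v => if G.Adj u v then 1 else 0)
  have hdiagsum : ∀ a, D a a + 2 = 2 * (F a).card := by
    intro a
    have h := aux_induce_sum G hG.IsAcyclic (π ⁻¹' {a}) (hfib a)
    rwa [hFeq a] at h
  have htotG : (∑ u, G.degree u) + 2 = 2 * Fintype.card V := by
    rw [SimpleGraph.sum_degrees_eq_twice_card_edges]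
    have := hG.card_edgeFinset
    omega
  have hcardV : ∑ a, (F a).card = Fintype.card V := by
    calc ∑ a, (F a).card = ∑ a, ∑ _v ∈ F a, 1 := by simp
      _ = ∑ _v : V, 1 := Finset.sum_fiberwise univ π (fun _ => 1)
      _ = Fintype.card V := by simp
  have hzero : ∀ a b, a ≠ b → ¬ R.Adj a b → D a b = 0 := by
    intro a b hne hnadj
    refine Finset.sum_eq_zero fun u hu => Finset.sum_eq_zero fun v hv => ?_
    rw [hFdef, Finset.mem_filter] at hu hv
    have hna : ¬ G.Adj u v := fun h => hnadj ((hadj a b hne).2 ⟨u, v, h, hu.2, hv.2⟩)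
    simp [hna]
  have hpos : ∀ a b, R.Adj a b → 1 ≤ D a b := by
    intro a b h
    obtain ⟨u, v, huv, hu, hv⟩ := (hadj a b h.ne).1 h
    have hu' : u ∈ F a := by simp [hFdef, hu]
    have hv' : v ∈ F b := by simp [hFdef, hv]
    have h1 : 1 ≤ ∑ w ∈ F b, if G.Adj u w then 1 else 0 := by
      have := Finset.single_le_sum (f := fun w => if G.Adj u w then (1:ℕ) else 0)
        (fun i _ => Nat.zero_le _) hv'
      simpa [huv] using this
    have h2 : (∑ w ∈ F b, if G.Adj u w then (1:ℕ) else 0)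
        ≤ ∑ x ∈ F a, ∑ w ∈ F b, if G.Adj x w then (1:ℕ) else 0 :=
      Finset.single_le_sum (f := fun x => ∑ w ∈ F b, if G.Adj x w then (1:ℕ) else 0)
        (fun i _ => Nat.zero_le _) hu'
    have h3 : D a b = ∑ x ∈ F a, ∑ w ∈ F b, if G.Adj x w then (1:ℕ) else 0 := by
      simp only [hDdef]
    omega
  have hrowdecomp : ∀ a, ∑ b, D a b = D a a + ∑ b ∈ R.neighborFinset a, D a b := by
    intro a
    rw [← Finset.sum_insert (R.notMem_neighborFinset_self a)]
    refine (Finset.sum_subset (Finset.subset_univ _) fun b _ hb => ?_).symm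
    rw [Finset.mem_insert, SimpleGraph.mem_neighborFinset] at hb
    push_neg at hb
    exact hzero a b (fun h => hb.1 h.symm) hb.2
  have htotR : (∑ a, R.degree a) + 2 = 2 * Fintype.card VR := by
    rw [SimpleGraph.sum_degrees_eq_twice_card_edges]
    have := hR.card_edgeFinset
    omega
  have hgrand : ∑ a, ∑ b, D a b = ∑ u, G.degree u := by
    calc ∑ a, ∑ b, D a b = ∑ a, ∑ u ∈ F a, G.degree u :=
          Finset.sum_congr rfl fun a _ => hrow a
      _ = ∑ u, G.degree u := Finset.sum_fiberwise univ π _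
  have hsumdiag : (∑ a, D a a) + 2 * Fintype.card VR = 2 * Fintype.card V := by
    calc (∑ a, D a a) + 2 * Fintype.card VR = ∑ a, (D a a + 2) := by
          rw [Finset.sum_add_distrib]
          simp [Finset.card_univ, mul_comm]
      _ = ∑ a, 2 * (F a).card := Finset.sum_congr rfl fun a _ => hdiagsum a
      _ = 2 * ∑ a, (F a).card := by rw [Finset.mul_sum]
      _ = 2 * Fintype.card V := by rw [hcardV]
  have hsplitsum : ∑ a, ∑ b, D a b
      = (∑ a, D a a) + ∑ a, ∑ b ∈ R.neighborFinset a, D a b := by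
    rw [← Finset.sum_add_distrib]
    exact Finset.sum_congr rfl fun a _ => hrowdecomp a
  have hge : ∀ a, R.degree a ≤ ∑ b ∈ R.neighborFinset a, D a b := by
    intro a
    calc R.degree a = ∑ _b ∈ R.neighborFinset a, 1 := by
          simp [← SimpleGraph.card_neighborFinset_eq_degree]
      _ ≤ ∑ b ∈ R.neighborFinset a, D a b :=
          Finset.sum_le_sum fun b hb => hpos a b (by rwa [SimpleGraph.mem_neighborFinset] at hb)
  have hofftot : ∑ a, ∑ b ∈ R.neighborFinset a, D a b = ∑ a, R.degree a := by
    omega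
  have hptwise : ∀ a, ∑ b ∈ R.neighborFinset a, D a b = R.degree a := by
    by_contra hcon
    push_neg at hcon
    obtain ⟨a, ha⟩ := hcon
    have hlt : R.degree a < ∑ b ∈ R.neighborFinset a, D a b := lt_of_le_of_ne (hge a) (Ne.symm ha)
    have : ∑ a, R.degree a < ∑ a, ∑ b ∈ R.neighborFinset a, D a b :=
      Finset.sum_lt_sum (fun i _ => hge i) ⟨a, Finset.mem_univ a, hlt⟩
    omega
  -- every leaf of R contains a leaf of G in its fiber
  have hkey : ∀ a, R.degree a = 1 → ∃ u, π u = a ∧ G.degree u = 1 := by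
    intro a ha
    have h1 : ∑ u ∈ F a, G.degree u = D a a + 1 := by
      rw [← hrow, hrowdecomp, hptwise, ha]
    by_contra hno
    push_neg at hno
    have hge2 : ∀ u ∈ F a, 2 ≤ G.degree u := by
      intro u hu
      rw [hFdef, Finset.mem_filter] at hu
      have h1' := aux_one_le_degree G hG.isConnected hV2 u
      have h2' := hno u hu.2
      omega
    have h3 : 2 * (F a).card ≤ ∑ u ∈ F a, G.degree u := by
      calc 2 * (F a).card = ∑ _u ∈ F a, 2 := by simp [mul_comm]
        _ ≤ ∑ u ∈ F a, G.degree u := Finset.sum_le_sum hge2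
    have hd := hdiagsum a
    omega
  -- leaves of R are at most leaves of G, hence at most l
  have hleafR : (univ.filter fun a => R.degree a = 1).card ≤ l := by
    refine le_trans ?_ hleaves
    have hex : ∀ a : VR, ∃ u, R.degree a = 1 → π u = a ∧ G.degree u = 1 := by
      intro a
      by_cases h : R.degree a = 1
      · obtain ⟨u, hu⟩ := hkey a h
        exact ⟨u, fun _ => hu⟩
      · exact ⟨(hFne a).choose, fun h' => absurd h' h⟩
    choose g hg using hex
    refine Finset.card_le_card_of_injOn g ?_ ?_
    · intro a ha
      rw [Finset.mem_coe, Finset.mem_filter] at ha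
      rw [Finset.mem_coe, Finset.mem_filter]
      exact ⟨Finset.mem_univ _, (hg a ha.2).2⟩
    · intro a ha b hb hab
      rw [Finset.mem_coe, Finset.mem_filter] at ha hb
      rw [← (hg a ha.2).1, ← (hg b hb.2).1, hab]
  -- now the counting on R
  set A : Finset VR := Wᶜ with hA
  have hdisjA : ∀ a ∈ A, ∀ b ∈ A, a ≠ b →
      Disjoint (R.incidenceFinset a) (R.incidenceFinset b) := by
    intro a ha b hb hab
    rw [Finset.disjoint_left]
    intro e hea heb
    rw [SimpleGraph.mem_incidenceFinset] at hea heb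
    have he : e = s(a, b) := (Sym2.mem_and_mem_iff hab).1 ⟨hea.2, heb.2⟩
    have : R.Adj a b := by
      rw [← SimpleGraph.mem_edgeSet, ← he]; exact hea.1
    rcases hW a b this with h | h
    · exact (Finset.mem_compl.1 (hA ▸ ha)) h
    · exact (Finset.mem_compl.1 (hA ▸ hb)) h
  have hbi : A.biUnion (fun a => R.incidenceFinset a)
      = R.edgeFinset.filter (fun e => ¬ ∀ x ∈ e, x ∈ W) := by
    ext e
    simp only [Finset.mem_biUnion, SimpleGraph.mem_incidenceFinset, Finset.mem_filter,
      SimpleGraph.mem_incidenceSet, SimpleGraph.mem_edgeFinset]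
    constructor
    · rintro ⟨a, ha, he⟩
      rw [hA, Finset.mem_compl] at ha
      exact ⟨he.1, fun hall => ha (hall a he.2)⟩
    · rintro ⟨he, hne⟩
      push_neg at hne
      obtain ⟨x, hx, hxW⟩ := hne
      exact ⟨x, by rw [hA, Finset.mem_compl]; exact hxW, he, hx⟩
  have hsumA : ∑ a ∈ A, R.degree a
      = (R.edgeFinset.filter fun e => ¬ ∀ x ∈ e, x ∈ W).card := by
    rw [← hbi, Finset.card_biUnion hdisjA]
    exact Finset.sum_congr rfl fun a _ => by rw [SimpleGraph.card_incidenceFinset_eq_degree]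
  have hsplit : (R.edgeFinset.filter fun e => ∀ x ∈ e, x ∈ W).card
      + (R.edgeFinset.filter fun e => ¬ ∀ x ∈ e, x ∈ W).card = R.edgeFinset.card :=
    Finset.card_filter_add_card_filter_not _
  have hAcount : 2 * A.card ≤ (∑ a ∈ A, R.degree a)
      + (A.filter fun a => R.degree a = 1).card := by
    rw [Finset.card_filter, ← Finset.sum_add_distrib]
    calc 2 * A.card = ∑ _a ∈ A, 2 := by simp [mul_comm]
      _ ≤ ∑ a ∈ A, (R.degree a + if R.degree a = 1 then 1 else 0) := by
          refine Finset.sum_le_sum fun a _ => ?_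
          have := aux_one_le_degree R hR.isConnected hn a
          split_ifs <;> omega
  have hALl : (A.filter fun a => R.degree a = 1).card ≤ l :=
    le_trans (Finset.card_le_card (Finset.filter_subset_filter _ (Finset.subset_univ A))) hleafR
  have hcardR := hR.card_edgeFinset
  have hWA : W.card + A.card = Fintype.card VR := by
    rw [hA]; exact Finset.card_add_card_compl W
  omega
end
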